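/- Let q be a prime power with q ≢ 1 (mod 3) and let F_q be the finite field with q elements. If g ∈ SL(3, F_q) satisfies g^(q² + q + 1) = 1 and g has an eigenvector in F_q³ (i.e., there exist a nonzero vector v ∈ F_q³ and λ ∈ F_q with g·v = λ·v), then g = 1. (This expresses that the anisotropic maximal torus of order q² + q + 1 in SL(3, F_q) meets every proper parabolic subgroup only in the center, which is trivial when 3 does not divide q − 1.) -/

import Mathlib

open Matrix

/-- Coprimality facts for `q^2+q+1`. -/
lemma stmt_14_coprime (q : ℕ) (h2 : 2 ≤ q) (h3 : q % 3 ≠ 1) :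
    Nat.Coprime (q ^ 2 + q + 1) ((q ^ 2 - 1) * (q ^ 2 - q)) ∧
      Nat.Coprime (q ^ 2 + q + 1) (q - 1) := by
  obtain ⟨r, rfl⟩ : ∃ r, q = r + 2 := ⟨q - 2, by omega⟩
  have eN : (r + 2) ^ 2 + (r + 2) + 1 = 3 + (r + 1) * (r + 4) := by ring
  have e1 : (r + 2) - 1 = r + 1 := by omega
  have e2 : (r + 2) ^ 2 - 1 = (r + 1) * (r + 3) := by
    zify [show 1 ≤ (r + 2) ^ 2 by nlinarith]; ring
  have e3 : (r + 2) ^ 2 - (r + 2) = (r + 1) * (r + 2) := by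
    zify [show r + 2 ≤ (r + 2) ^ 2 by nlinarith]; ring
  have c3 : Nat.Coprime 3 (r + 1) :=
    (Nat.Prime.coprime_iff_not_dvd Nat.prime_three).mpr (by omega)
  have cqm1 : Nat.Coprime ((r + 2) ^ 2 + (r + 2) + 1) (r + 1) := by
    rw [eN, Nat.coprime_add_mul_left_left]; exact c3
  have cqp1 : Nat.Coprime ((r + 2) ^ 2 + (r + 2) + 1) (r + 3) := by
    have : (r + 2) ^ 2 + (r + 2) + 1 = 1 + (r + 3) * (r + 2) := by ring
    rw [this, Nat.coprime_add_mul_left_left]; exact Nat.coprime_one_left _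
  have cq : Nat.Coprime ((r + 2) ^ 2 + (r + 2) + 1) (r + 2) := by
    have : (r + 2) ^ 2 + (r + 2) + 1 = 1 + (r + 2) * (r + 3) := by ring
    rw [this, Nat.coprime_add_mul_left_left]; exact Nat.coprime_one_left _
  refine ⟨?_, by rwa [e1]⟩
  rw [e2, e3]
  exact (cqm1.mul_right cqp1).mul_right (cqm1.mul_right cq)

/-- Let `q` be a prime power with `q ≢ 1 (mod 3)` and `F_q` the finite field with `q`
elements.  If `g ∈ SL(3, F_q)` satisfies `g^(q² + q + 1) = 1` and `g` has an eigenvector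
in `F_q³`, then `g = 1`. -/
theorem stmt_14 (F : Type*) [Field F] [Fintype F]
    (hq : Fintype.card F % 3 ≠ 1)
    (g : Matrix.SpecialLinearGroup (Fin 3) F)
    (hord : g ^ (Fintype.card F ^ 2 + Fintype.card F + 1) = 1)
    (hev : ∃ v : Fin 3 → F, v ≠ 0 ∧ ∃ lam : F,
      (g : Matrix (Fin 3) (Fin 3) F).mulVec v = lam • v) :
    g = 1 := by
  classical
  set q : ℕ := Fintype.card F with hqdef
  set N : ℕ := q ^ 2 + q + 1 with hNdef
  have hq2 : 2 ≤ q := Fintype.one_lt_card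
  obtain ⟨hcGL, hcU⟩ := stmt_14_coprime q hq2 hq
  obtain ⟨v, hv, lam, hlam⟩ := hev
  -- powers of g act on v by powers of lam
  have hpow : ∀ k : ℕ, ((g ^ k : SpecialLinearGroup (Fin 3) F) :
      Matrix (Fin 3) (Fin 3) F).mulVec v = lam ^ k • v := by
    intro k
    induction k with
    | zero => simp [Matrix.mulVec_one]
    | succ k ih =>
      rw [pow_succ', pow_succ']
      have hcoe : ((g * g ^ k : SpecialLinearGroup (Fin 3) F) :
          Matrix (Fin 3) (Fin 3) F) = (g : Matrix (Fin 3) (Fin 3) F) *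
          ((g ^ k : SpecialLinearGroup (Fin 3) F) : Matrix (Fin 3) (Fin 3) F) := rfl
      rw [hcoe, ← Matrix.mulVec_mulVec, ih, Matrix.mulVec_smul, hlam, smul_smul,
        mul_comm]
  -- lam ^ N = 1
  have hlamN : lam ^ N = 1 := by
    have h := hpow N
    rw [hord] at h
    change (1 : Matrix (Fin 3) (Fin 3) F).mulVec v = lam ^ N • v at h
    simp only [SpecialLinearGroup.coe_one, Matrix.mulVec_one, Matrix.one_mulVec] at h
    obtain ⟨i, hi⟩ := Function.ne_iff.mp hv
    have hvi : v i ≠ 0 := hi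
    have hcf : v i = lam ^ N * v i := by
      have := congrFun h i
      simpa [Pi.smul_apply, smul_eq_mul] using this
    have hz : (lam ^ N - 1) * v i = 0 := by
      rw [sub_mul, one_mul, ← hcf, sub_self]
    rcases mul_eq_zero.mp hz with h' | h'
    · exact sub_eq_zero.mp h'
    · exact absurd h' hvi
  have hlam0 : lam ≠ 0 := by
    intro h; rw [h, zero_pow (by positivity)] at hlamN; exact zero_ne_one hlamN
  -- lam = 1 via order in Fˣ
  have hlam1 : lam = 1 := by
    set u : Fˣ := Units.mk0 lam hlam0 with hu
    have huN : u ^ N = 1 := by ext; push_cast [hu]; exact hlamN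
    have h1 : orderOf u ∣ N := orderOf_dvd_of_pow_eq_one huN
    have h2 : orderOf u ∣ q - 1 := by
      have := orderOf_dvd_card (x := u)
      rwa [Fintype.card_units] at this
    have : orderOf u = 1 := Nat.eq_one_of_dvd_coprimes hcU h1 h2
    have : u = 1 := orderOf_eq_one_iff.mp this
    simpa [hu, Units.ext_iff] using this
  subst hlam1
  rw [one_smul] at hlam
  -- set up the linear endomorphism
  set f : ((Fin 3 → F) →ₗ[F] (Fin 3 → F)) :=
    Matrix.toLinAlgEquiv' (g : Matrix (Fin 3) (Fin 3) F) with hfdef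
  have hfapp : ∀ x, f x = (g : Matrix (Fin 3) (Fin 3) F).mulVec x := fun x => rfl
  have hfN : f ^ N = 1 := by
    rw [hfdef, ← map_pow, show (g : Matrix (Fin 3) (Fin 3) F) ^ N =
      ((g ^ N : Matrix.SpecialLinearGroup (Fin 3) F) : Matrix (Fin 3) (Fin 3) F) from
      (Matrix.SpecialLinearGroup.coe_pow g N).symm, hord]
    simp
  have hfv : f v = v := by rw [hfapp, hlam]
  set W : Submodule F (Fin 3 → F) := Submodule.span F {v} with hWdef
  have hvW : v ∈ W := Submodule.mem_span_singleton_self v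
  have hle : W ≤ W.comap f := by
    rw [hWdef, Submodule.span_le]
    intro x hx
    rw [Set.mem_singleton_iff] at hx
    subst hx
    simpa [Submodule.mem_comap, hfv] using hvW
  set fbar := Submodule.mapQ W W f hle with hfbardef
  have hfbar_mk : ∀ x, fbar (Submodule.Quotient.mk x) = Submodule.Quotient.mk (f x) :=
    fun x => rfl
  have hfbar_pow : ∀ (k : ℕ) (x : Fin 3 → F),
      (fbar ^ k) (Submodule.Quotient.mk x) = Submodule.Quotient.mk ((f ^ k) x) := by
    intro k
    induction k with
    | zero => intro x; simp
    | succ k ih =>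
      intro x
      rw [pow_succ, pow_succ]
      have : (fbar ^ k * fbar) (Submodule.Quotient.mk x)
          = (fbar ^ k) (fbar (Submodule.Quotient.mk x)) := rfl
      rw [this, hfbar_mk, ih]
      rfl
  have hfbarN : fbar ^ N = 1 := by
    apply LinearMap.ext
    intro y
    obtain ⟨x, rfl⟩ := Submodule.Quotient.mk_surjective W y
    rw [hfbar_pow, hfN]
    rfl
  -- the quotient has dimension 2
  have hrank : Module.finrank F ((Fin 3 → F) ⧸ W) = 2 := by
    have h1 : Module.finrank F ((Fin 3 → F) ⧸ W) + Module.finrank F W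
        = Module.finrank F (Fin 3 → F) := Submodule.finrank_quotient_add_finrank W
    rw [finrank_span_singleton hv, Module.finrank_fintype_fun_eq_card,
      Fintype.card_fin] at h1
    omega
  set b : Module.Basis (Fin 2) F ((Fin 3 → F) ⧸ W) :=
    (Module.finBasis F ((Fin 3 → F) ⧸ W)).reindex (finCongr hrank) with hbdef
  set M : Matrix (Fin 2) (Fin 2) F := LinearMap.toMatrixAlgEquiv b fbar with hMdef
  have hMN : M ^ N = 1 := by
    rw [hMdef, ← map_pow, hfbarN, _root_.map_one]
  -- M is a unit of finite order dividing N
  have hNpos : 0 < N := by positivity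
  have hMunit : M * M ^ (N - 1) = 1 := by
    rw [← pow_succ']
    rw [show N - 1 + 1 = N by omega]
    exact hMN
  have hMunit' : M ^ (N - 1) * M = 1 := by
    rw [← pow_succ]
    rw [show N - 1 + 1 = N by omega]
    exact hMN
  set u : GL (Fin 2) F := ⟨M, M ^ (N - 1), hMunit, hMunit'⟩ with hudef
  have huN : u ^ N = 1 := by
    apply Units.ext
    rw [Units.val_pow_eq_pow_val, Units.val_one]
    exact hMN
  have hM1 : M = 1 := by
    have h1 : orderOf u ∣ N := orderOf_dvd_of_pow_eq_one huN
    have h2 : orderOf u ∣ (q ^ 2 - 1) * (q ^ 2 - q) := by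
      have hcard : Nat.card (GL (Fin 2) F) = (q ^ 2 - 1) * (q ^ 2 - q) := by
        rw [Matrix.card_GL_field]
        rw [Fin.prod_univ_two]
        simp [pow_one]
        rfl
      rw [← hcard]
      exact orderOf_dvd_natCard u
    have : orderOf u = 1 := Nat.eq_one_of_dvd_coprimes hcGL h1 h2
    have hu1 : u = 1 := orderOf_eq_one_iff.mp this
    have := congrArg Units.val hu1
    simpa [hudef] using this
  have hfbar1 : fbar = 1 := by
    have := congrArg (LinearMap.toMatrixAlgEquiv b).symm
      (hMdef.symm.trans hM1)
    simpa using this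
  -- hence f = 1 + n with n mapping into W and vanishing on W
  set n : ((Fin 3 → F) →ₗ[F] (Fin 3 → F)) := f - 1 with hndef
  have hnW : ∀ x, n x ∈ W := by
    intro x
    have : Submodule.Quotient.mk (f x) = (Submodule.Quotient.mk x :
        (Fin 3 → F) ⧸ W) := by
      rw [← hfbar_mk, hfbar1]; rfl
    have := (Submodule.Quotient.eq W).mp this
    simpa [hndef, LinearMap.sub_apply] using this
  have hnvanish : ∀ x ∈ W, n x = 0 := by
    intro x hx
    rw [hWdef, Submodule.mem_span_singleton] at hx
    obtain ⟨c, rfl⟩ := hx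
    simp [hndef, LinearMap.sub_apply, LinearMap.map_smul, hfv]
  have hnn : n * n = 0 := by
    apply LinearMap.ext
    intro x
    exact hnvanish _ (hnW x)
  -- (1 + n)^k = 1 + k • n
  have hbinom : ∀ k : ℕ, (1 + n) ^ k = 1 + k • n := by
    intro k
    induction k with
    | zero => simp
    | succ k ih =>
      rw [pow_succ, ih, add_mul, mul_add, mul_add, one_mul, mul_one, one_mul,
        smul_mul_assoc, hnn, smul_zero, add_zero, succ_nsmul, ← add_assoc,
        add_assoc (1 : (Fin 3 → F) →ₗ[F] (Fin 3 → F)), add_comm n (k • n),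
        ← add_assoc]
  have hfn : f = 1 + n := by rw [hndef]; abel
  have hNn : (N : ℕ) • n = 0 := by
    have := hfN
    rw [hfn, hbinom N] at this
    have h := congrArg (· - (1 : (Fin 3 → F) →ₗ[F] (Fin 3 → F))) this
    simpa using h
  have hncast : ((N : F)) • n = 0 := by
    rw [Nat.cast_smul_eq_nsmul]; exact hNn
  have hNF : (N : F) = 1 := by
    have hcard : ((q : ℕ) : F) = 0 := by
      have := FiniteField.cast_card_eq_zero F
      simp only [hqdef]
      exact this
    push_cast [hNdef]
    rw [hcard]
    ring
  have hn0 : n = 0 := by rw [hNF, one_smul] at hncast; exact hncast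
  have hf1 : f = 1 := by rw [hfn, hn0, add_zero]
  have : (g : Matrix (Fin 3) (Fin 3) F) = 1 := by
    have := congrArg Matrix.toLinAlgEquiv'.symm hf1
    simpa [hfdef] using this
  ext i j
  rw [this]
  simp
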